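/- Let n > 2k > 0 and k ≥ 2. The family H consisting of the set {2,...,k+1} together with all sets A ∈ C([n],k) such that 1 ∈ A and A ∩ {2,...,k+1} ≠ ∅ is nontrivially intersecting and satisfies |H| = C(n−1, k−1) − C(n−k−1, k−1) + 1. -/

import Mathlib

open Finset

lemma hm_count1 (n k : ℕ) (hk : 2 ≤ k) (hnk : 2 * k < n) :
    (((Icc 1 n).powersetCard k).filter (fun A => 1 ∈ A)).card
      = (n - 1).choose (k - 1) := by
  have h : (((Icc 1 n).powersetCard k).filter (fun A => 1 ∈ A)).card
      = ((Icc 2 n).powersetCard (k - 1)).card := by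
    apply Finset.card_nbij' (fun A => A.erase 1) (fun B => insert 1 B)
    · intro A hA
      simp only [mem_coe, mem_filter, mem_powersetCard] at hA
      obtain ⟨⟨hsub, hcard⟩, h1⟩ := hA
      rw [mem_coe, mem_powersetCard]
      constructor
      · intro x hx
        have hx' := hsub (Finset.mem_of_mem_erase hx)
        have hx1 := Finset.ne_of_mem_erase hx
        simp only [mem_Icc] at hx' ⊢
        omega
      · rw [Finset.card_erase_of_mem h1, hcard]
    · intro B hB
      rw [mem_coe, mem_powersetCard] at hB
      obtain ⟨hsub, hcard⟩ := hB
      have h1B : 1 ∉ B := by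
        intro h; have := hsub h; simp [mem_Icc] at this
      simp only [mem_coe, mem_filter, mem_powersetCard]
      refine ⟨⟨?_, ?_⟩, by simp⟩
      · intro x hx
        rcases Finset.mem_insert.mp hx with rfl | hx
        · simp [mem_Icc]; omega
        · have := hsub hx; simp only [mem_Icc] at this ⊢; omega
      · rw [Finset.card_insert_of_notMem h1B, hcard]; omega
    · intro A hA
      simp only [mem_coe, mem_filter] at hA
      exact Finset.insert_erase hA.2
    · intro B hB
      rw [mem_coe, mem_powersetCard] at hB
      have h1B : 1 ∉ B := by
        intro h; have := hB.1 h; simp [mem_Icc] at this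
      exact Finset.erase_insert h1B
  rw [h, Finset.card_powersetCard, Nat.card_Icc]
  congr 1

lemma hm_count2 (n k : ℕ) (hk : 2 ≤ k) (hnk : 2 * k < n) :
    (((Icc 1 n).powersetCard k).filter
        (fun A => 1 ∈ A ∧ ¬ (A ∩ Icc 2 (k + 1)).Nonempty)).card
      = (n - k - 1).choose (k - 1) := by
  have h : (((Icc 1 n).powersetCard k).filter
        (fun A => 1 ∈ A ∧ ¬ (A ∩ Icc 2 (k + 1)).Nonempty)).card
      = ((Icc (k + 2) n).powersetCard (k - 1)).card := by
    apply Finset.card_nbij' (fun A => A.erase 1) (fun B => insert 1 B)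
    · intro A hA
      simp only [mem_coe, mem_filter, mem_powersetCard, Finset.not_nonempty_iff_eq_empty] at hA
      obtain ⟨⟨hsub, hcard⟩, h1, hemp⟩ := hA
      rw [mem_coe, mem_powersetCard]
      constructor
      · intro x hx
        have hxA := Finset.mem_of_mem_erase hx
        have hx' := hsub hxA
        have hx1 := Finset.ne_of_mem_erase hx
        have hxnot : x ∉ Icc 2 (k + 1) := by
          intro hmem
          have : x ∈ A ∩ Icc 2 (k + 1) := Finset.mem_inter.mpr ⟨hxA, hmem⟩
          simp [hemp] at this
        simp only [mem_Icc] at hx' hxnot ⊢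
        omega
      · rw [Finset.card_erase_of_mem h1, hcard]
    · intro B hB
      rw [mem_coe, mem_powersetCard] at hB
      obtain ⟨hsub, hcard⟩ := hB
      have h1B : 1 ∉ B := by
        intro h; have := hsub h; simp [mem_Icc] at this
      simp only [mem_coe, mem_filter, mem_powersetCard, Finset.not_nonempty_iff_eq_empty]
      refine ⟨⟨?_, ?_⟩, by simp, ?_⟩
      · intro x hx
        rcases Finset.mem_insert.mp hx with rfl | hx
        · simp [mem_Icc]; omega
        · have := hsub hx; simp only [mem_Icc] at this ⊢; omega
      · rw [Finset.card_insert_of_notMem h1B, hcard]; omega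
      · rw [Finset.eq_empty_iff_forall_notMem]
        intro x hx
        rw [Finset.mem_inter, Finset.mem_insert] at hx
        obtain ⟨h1 | h1, h2⟩ := hx
        · subst h1; simp [mem_Icc] at h2
        · have := hsub h1; simp only [mem_Icc] at this h2; omega
    · intro A hA
      simp only [mem_coe, mem_filter] at hA
      exact Finset.insert_erase hA.2.1
    · intro B hB
      rw [mem_coe, mem_powersetCard] at hB
      have h1B : 1 ∉ B := by
        intro h; have := hB.1 h; simp [mem_Icc] at this
      exact Finset.erase_insert h1B
  rw [h, Finset.card_powersetCard, Nat.card_Icc]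
  congr 1
  omega

/-- The Hilton–Milner family: `{2, ..., k+1}` together with all `k`-element subsets of
`[n]` containing `1` and meeting `{2, ..., k+1}`, is nontrivially intersecting and has
cardinality `C(n-1, k-1) - C(n-k-1, k-1) + 1`. -/
theorem hilton_milner_example (n k : ℕ) (hk : 2 ≤ k) (hnk : 2 * k < n)
    (H : Finset (Finset ℕ))
    (hH : H = insert (Finset.Icc 2 (k + 1))
      (((Finset.Icc 1 n).powersetCard k).filter
        (fun A => 1 ∈ A ∧ (A ∩ Finset.Icc 2 (k + 1)).Nonempty))) :
    (∀ A ∈ H, ∀ B ∈ H, (A ∩ B).Nonempty) ∧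
    (¬ ∃ x, ∀ A ∈ H, x ∈ A) ∧
    H.card = (n - 1).choose (k - 1) - (n - k - 1).choose (k - 1) + 1 := by
  set B0 : Finset ℕ := Finset.Icc 2 (k + 1) with hB0
  set F : Finset (Finset ℕ) := ((Finset.Icc 1 n).powersetCard k).filter
      (fun A => 1 ∈ A ∧ (A ∩ B0).Nonempty) with hF
  have hmemF : ∀ A ∈ F, 1 ∈ A ∧ (A ∩ B0).Nonempty := by
    intro A hA; exact (Finset.mem_filter.mp hA).2
  refine ⟨?_, ?_, ?_⟩
  · intro A hA B hB
    rw [hH, Finset.mem_insert] at hA hB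
    rcases hA with rfl | hA <;> rcases hB with rfl | hB
    · exact ⟨2, by simp [hB0, mem_Icc]; omega⟩
    · obtain ⟨h1, x, hx⟩ := hmemF B hB
      rw [Finset.mem_inter] at hx
      exact ⟨x, Finset.mem_inter.mpr ⟨hx.2, hx.1⟩⟩
    · exact (hmemF A hA).2
    · exact ⟨1, Finset.mem_inter.mpr ⟨(hmemF A hA).1, (hmemF B hB).1⟩⟩
  · rintro ⟨x, hx⟩
    have hxB0 : x ∈ B0 := hx B0 (by rw [hH]; exact Finset.mem_insert_self _ _)
    rw [hB0, mem_Icc] at hxB0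
    set A : Finset ℕ := (Finset.Icc 1 (k + 1)).erase x with hA
    have hAF : A ∈ F := by
      rw [hF, Finset.mem_filter, Finset.mem_powersetCard]
      refine ⟨⟨?_, ?_⟩, ?_, ?_⟩
      · intro y hy
        have := Finset.mem_of_mem_erase hy
        simp only [mem_Icc] at this ⊢; omega
      · rw [Finset.card_erase_of_mem (by simp [mem_Icc]; omega), Nat.card_Icc]
        omega
      · apply Finset.mem_erase.mpr
        constructor
        · omega
        · simp [mem_Icc]
      · refine ⟨if x = 2 then 3 else 2,
          Finset.mem_inter.mpr ⟨Finset.mem_erase.mpr ⟨?_, ?_⟩, ?_⟩⟩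
        · split <;> omega
        · rw [mem_Icc]; split <;> omega
        · rw [hB0, mem_Icc]; split <;> omega
    have := hx A (by rw [hH]; exact Finset.mem_insert_of_mem hAF)
    rw [hA, Finset.mem_erase] at this
    exact this.1 rfl
  · have hB0F : B0 ∉ F := by
      rw [hF, Finset.mem_filter]
      rintro ⟨-, h1, -⟩
      simp [hB0, mem_Icc] at h1
    have hsplit : F.card + (((Finset.Icc 1 n).powersetCard k).filter
        (fun A => 1 ∈ A ∧ ¬ (A ∩ B0).Nonempty)).card
        = (((Finset.Icc 1 n).powersetCard k).filter (fun A => 1 ∈ A)).card := by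
      rw [hF]
      rw [← Finset.filter_filter, ← Finset.filter_filter,
        Finset.card_filter_add_card_filter_not]
    have h1 := hm_count1 n k hk hnk
    have h2 := hm_count2 n k hk hnk
    rw [← hB0] at h2
    rw [hH, Finset.card_insert_of_notMem hB0F]
    omega
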